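/- The marked-edge plus-amplitude of the star-graph walk is uniformly approximated by sin(λ_M t): for every ε > 0 there exists M₀ such that for all M ≥ M₀ and all t ∈ ℕ, |(A^t X₀)₃ − sin(λ_M · t)| < ε, where λ_M = arccos((M−1)/M). -/

import Mathlib

/-- The reduced `3 × 3` transition matrix of the star-graph quantum walk with `M` edges:
rows `(0, (M−2)/M, −2/M)`, `(1, 0, 0)`, `(0, 2(M−1)/M, (M−2)/M)`. -/
noncomputable def starA (M : ℕ) : Matrix (Fin 3) (Fin 3) ℂ :=
  !![0, ((M : ℂ) - 2) / M, -2 / M;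
     1, 0, 0;
     0, 2 * ((M : ℂ) - 1) / M, ((M : ℂ) - 2) / M]

/-- The reduced initial vector `X₀ = (1/√(2M))·(1,1,1)ᵀ`. -/
noncomputable def starX0 (M : ℕ) : Fin 3 → ℂ :=
  fun _ => ((1 / Real.sqrt (2 * M) : ℝ) : ℂ)

/-- `λ_M = arccos((M−1)/M)`. -/
noncomputable def starLam (M : ℕ) : ℝ :=
  Real.arccos (((M : ℝ) - 1) / M)

lemma starLam_cos (M : ℕ) (hM : 1 ≤ M) : Real.cos (starLam M) = ((M:ℝ)-1)/M := by
  have hm : (1:ℝ) ≤ M := by exact_mod_cast hM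
  apply Real.cos_arccos
  · have : (0:ℝ) ≤ ((M:ℝ)-1)/M := div_nonneg (by linarith) (by linarith)
    linarith
  · rw [div_le_one (by linarith)]; linarith

lemma starLam_sin (M : ℕ) (hM : 1 ≤ M) :
    Real.sin (starLam M) = Real.sqrt (2*(M:ℝ)-1) / M := by
  have hm : (1:ℝ) ≤ M := by exact_mod_cast hM
  have hM0 : (0:ℝ) < M := by linarith
  rw [starLam, Real.sin_arccos]
  have h1 : 1 - (((M:ℝ)-1)/M)^2 = (2*(M:ℝ)-1)/M^2 := by field_simp; ring
  rw [h1, Real.sqrt_div (by linarith : (0:ℝ) ≤ 2*(M:ℝ)-1), Real.sqrt_sq hM0.le]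

lemma stepEq0 (m r k C S e : ℝ) (hm : m ≠ 0) (hd : (2*m-1) ≠ 0) (hk : k ≠ 0) (hr : r^2 = 2*m-1) :
    (m-2)/m * ((-e + 2*m*C)/((2*m-1)*k)) + (-2)/m * ((e + 2*(m-1)*C + 2*(m-1)*r*S)/((2*m-1)*k))
      = (-e + 2*(m-1)*(C*((m-1)/m) - S*(r/m)) - 2*r*(S*((m-1)/m) + C*(r/m)))/((2*m-1)*k) := by
  field_simp
  linear_combination 2*C/(2*m-1)*hr

lemma stepEq1 (m r k C S e : ℝ) (hm : m ≠ 0) (hd : (2*m-1) ≠ 0) (hk : k ≠ 0) :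
    (e + 2*(m-1)*C - 2*r*S)/((2*m-1)*k)
      = (e + 2*m*(C*((m-1)/m) - S*(r/m)))/((2*m-1)*k) := by
  field_simp
  ring

lemma stepEq2 (m r k C S e : ℝ) (hm : m ≠ 0) (hd : (2*m-1) ≠ 0) (hk : k ≠ 0) (hr : r^2 = 2*m-1) :
    2*(m-1)/m * ((-e + 2*m*C)/((2*m-1)*k)) + (m-2)/m * ((e + 2*(m-1)*C + 2*(m-1)*r*S)/((2*m-1)*k))
      = (-e + 2*(m-1)*(C*((m-1)/m) - S*(r/m)) + 2*(m-1)*r*(S*((m-1)/m) + C*(r/m)))/((2*m-1)*k) := by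
  field_simp
  linear_combination (-(2*(m-1)*C))*hr

/-- closed form for the walk vector -/
noncomputable def starF (M t : ℕ) : Fin 3 → ℝ := fun i =>
  ![ ((-1:ℝ)^t + 2*((M:ℝ)-1)*Real.cos (starLam M * t)
       - 2*Real.sqrt (2*(M:ℝ)-1)*Real.sin (starLam M * t)),
     (-(-1:ℝ)^t + 2*(M:ℝ)*Real.cos (starLam M * t)),
     ((-1:ℝ)^t + 2*((M:ℝ)-1)*Real.cos (starLam M * t)
       + 2*((M:ℝ)-1)*Real.sqrt (2*(M:ℝ)-1)*Real.sin (starLam M * t)) ] i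
   / ((2*(M:ℝ)-1) * Real.sqrt (2*(M:ℝ)))

lemma starF_spec (M : ℕ) (hM : 2 ≤ M) (t : ℕ) :
    (starA M ^ t).mulVec (starX0 M) = fun i => ((starF M t i : ℝ) : ℂ) := by
  have hm : (2:ℝ) ≤ M := by exact_mod_cast hM
  have hM0 : (0:ℝ) < M := by linarith
  have hMne : (M:ℝ) ≠ 0 := ne_of_gt hM0
  have hd : (0:ℝ) < 2*(M:ℝ)-1 := by linarith
  have hdne : (2*(M:ℝ)-1) ≠ 0 := ne_of_gt hd
  have hkpos : (0:ℝ) < Real.sqrt (2*(M:ℝ)) := Real.sqrt_pos.2 (by linarith)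
  have hkne : Real.sqrt (2*(M:ℝ)) ≠ 0 := ne_of_gt hkpos
  have hr2 : (Real.sqrt (2*(M:ℝ)-1))^2 = 2*(M:ℝ)-1 := Real.sq_sqrt hd.le
  have hc := starLam_cos M (by omega)
  have hs := starLam_sin M (by omega)
  induction t with
  | zero =>
    have h0 : ∀ i, starF M 0 i = 1 / Real.sqrt (2*(M:ℝ)) := by
      intro i
      fin_cases i <;>
      · simp [starF]
        field_simp
        ring
    simp only [pow_zero, Matrix.one_mulVec]
    funext i
    rw [h0 i]
    simp [starX0]
  | succ t ih =>
    have hC' : Real.cos (starLam M * (t+1 : ℕ)) =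
        Real.cos (starLam M * t) * (((M:ℝ)-1)/M)
          - Real.sin (starLam M * t) * (Real.sqrt (2*(M:ℝ)-1)/M) := by
      push_cast
      rw [mul_add, mul_one, Real.cos_add, hc, hs]
    have hS' : Real.sin (starLam M * (t+1 : ℕ)) =
        Real.sin (starLam M * t) * (((M:ℝ)-1)/M)
          + Real.cos (starLam M * t) * (Real.sqrt (2*(M:ℝ)-1)/M) := by
      push_cast
      rw [mul_add, mul_one, Real.sin_add, hc, hs]
    rw [pow_succ', ← Matrix.mulVec_mulVec, ih]
    funext i
    have hstep0 : ((M:ℝ)-2)/M * starF M t 1 + (-2)/M * starF M t 2 = starF M (t+1) 0 := by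
      simp only [starF, Matrix.cons_val_zero, Matrix.cons_val_one, Matrix.head_cons,
        Matrix.cons_val_two, Matrix.tail_cons]
      rw [hC', hS', pow_succ]
      linear_combination stepEq0 (M:ℝ) (Real.sqrt (2*(M:ℝ)-1)) (Real.sqrt (2*(M:ℝ)))
        (Real.cos (starLam M * t)) (Real.sin (starLam M * t)) ((-1:ℝ)^t) hMne hdne hkne hr2
    have hstep1 : starF M t 0 = starF M (t+1) 1 := by
      simp only [starF, Matrix.cons_val_zero, Matrix.cons_val_one, Matrix.head_cons,
        Matrix.cons_val_two, Matrix.tail_cons]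
      rw [hC', pow_succ]
      linear_combination stepEq1 (M:ℝ) (Real.sqrt (2*(M:ℝ)-1)) (Real.sqrt (2*(M:ℝ)))
        (Real.cos (starLam M * t)) (Real.sin (starLam M * t)) ((-1:ℝ)^t) hMne hdne hkne
    have hstep2 : 2*((M:ℝ)-1)/M * starF M t 1 + ((M:ℝ)-2)/M * starF M t 2 = starF M (t+1) 2 := by
      simp only [starF, Matrix.cons_val_zero, Matrix.cons_val_one, Matrix.head_cons,
        Matrix.cons_val_two, Matrix.tail_cons]
      rw [hC', hS', pow_succ]
      linear_combination stepEq2 (M:ℝ) (Real.sqrt (2*(M:ℝ)-1)) (Real.sqrt (2*(M:ℝ)))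
        (Real.cos (starLam M * t)) (Real.sin (starLam M * t)) ((-1:ℝ)^t) hMne hdne hkne hr2
    fin_cases i
    · show ((starA M).mulVec fun i => ((starF M t i : ℝ) : ℂ)) 0 = ((starF M (t+1) 0 : ℝ) : ℂ)
      rw [← hstep0]
      simp [starA, Matrix.mulVec, dotProduct, Fin.sum_univ_three]
    · show ((starA M).mulVec fun i => ((starF M t i : ℝ) : ℂ)) 1 = ((starF M (t+1) 1 : ℝ) : ℂ)
      rw [← hstep1]
      simp [starA, Matrix.mulVec, dotProduct, Fin.sum_univ_three]
    · show ((starA M).mulVec fun i => ((starF M t i : ℝ) : ℂ)) 2 = ((starF M (t+1) 2 : ℝ) : ℂ)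
      rw [← hstep2]
      simp [starA, Matrix.mulVec, dotProduct, Fin.sum_univ_three]


set_option maxHeartbeats 2000000 in
/-- The marked-edge plus-amplitude `(A^t X₀)₃ = ψ⁺ 0 (t)` of the star-graph walk is
uniformly approximated by `sin(λ_M t)`: for every `ε > 0` there is `M₀` such that for all
`M ≥ M₀` and all `t ∈ ℕ`, `|(A^t X₀)₃ − sin(λ_M t)| < ε`. -/
theorem starWalk_marked_amplitude_approx_sin :
    ∀ ε : ℝ, 0 < ε → ∃ M₀ : ℕ, ∀ M : ℕ, M₀ ≤ M → ∀ t : ℕ,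
      ‖((starA M ^ t).mulVec (starX0 M)) 2 -
        ((Real.sin (starLam M * t) : ℝ) : ℂ)‖ < ε := by
  intro ε hε
  obtain ⟨N, hN⟩ := exists_nat_gt (max (4/ε^2) (2/ε))
  refine ⟨N + 2, fun M hM t => ?_⟩
  have hM2 : 2 ≤ M := le_trans (by omega) hM
  have hmN : ((N:ℝ) + 2) ≤ (M:ℝ) := by exact_mod_cast hM
  have h4 : 4/ε^2 < (N:ℝ) := lt_of_le_of_lt (le_max_left _ _) hN
  have h2e : 2/ε < (N:ℝ) := lt_of_le_of_lt (le_max_right _ _) hN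
  set m : ℝ := (M:ℝ) with hmdef
  have hm : (2:ℝ) ≤ m := by rw [hmdef]; exact_mod_cast hM2
  have hM0 : (0:ℝ) < m := by linarith
  have hd : (0:ℝ) < 2*m-1 := by linarith
  have hrpos : (0:ℝ) < Real.sqrt (2*m-1) := Real.sqrt_pos.2 hd
  have hkpos : (0:ℝ) < Real.sqrt (2*m) := Real.sqrt_pos.2 (by linarith)
  have hr2 : (Real.sqrt (2*m-1))^2 = 2*m-1 := Real.sq_sqrt hd.le
  set r : ℝ := Real.sqrt (2*m-1) with hrdef
  set k : ℝ := Real.sqrt (2*m) with hkdef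
  -- bounds on r * k
  have hrk : r * k = Real.sqrt ((2*m-1)*(2*m)) := (Real.sqrt_mul hd.le _).symm
  have hrkpos : 0 < r * k := mul_pos hrpos hkpos
  have hlow : 2*m - 2 ≤ r * k := by
    rw [hrk]
    rw [show (2*m-2) = Real.sqrt ((2*m-2)^2) from (Real.sqrt_sq (by linarith)).symm]
    apply Real.sqrt_le_sqrt
    nlinarith
  have hup : r * k ≤ 2*m := by
    have h1 : (2*m-1)*(2*m) ≤ (2*m)^2 := by nlinarith
    calc r * k = Real.sqrt ((2*m-1)*(2*m)) := hrk
      _ ≤ Real.sqrt ((2*m)^2) := Real.sqrt_le_sqrt h1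
      _ = 2*m := Real.sqrt_sq (by linarith)
  -- rewrite with closed form
  have hspec := congrFun (starF_spec M hM2 t) 2
  rw [hspec, ← Complex.ofReal_sub, Complex.norm_real, Real.norm_eq_abs]
  set C : ℝ := Real.cos (starLam M * t)
  set S : ℝ := Real.sin (starLam M * t)
  set e : ℝ := (-1:ℝ)^t
  have hF2 : starF M t 2 = (e + 2*(m-1)*C + 2*(m-1)*r*S) / ((2*m-1)*k) := by
    simp only [starF, Matrix.cons_val_two, Matrix.tail_cons, Matrix.head_cons]
    rfl
  set w : ℝ := 2*(m-1)*r/((2*m-1)*k) with hwdef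
  have hw' : w = 2*(m-1)/(r*k) := by
    rw [hwdef, ← hr2]; field_simp
  have hw1 : w ≤ 1 := by
    rw [hw', div_le_one hrkpos]; linarith
  have hexpr : starF M t 2 - S = (e + 2*(m-1)*C)/((2*m-1)*k) + (w - 1)*S := by
    rw [hF2, hwdef]; field_simp; ring
  have habs_e : |e| = 1 := by simp [e, abs_pow]
  have hCle : |C| ≤ 1 := Real.abs_cos_le_one _
  have hSle : |S| ≤ 1 := Real.abs_sin_le_one _
  have h1 : |(e + 2*(m-1)*C)/((2*m-1)*k)| ≤ 1/k := by
    rw [abs_div, abs_of_pos (mul_pos hd hkpos)]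
    rw [div_le_div_iff₀ (mul_pos hd hkpos) hkpos]
    have : |e + 2*(m-1)*C| ≤ 2*m-1 := by
      calc |e + 2*(m-1)*C| ≤ |e| + |2*(m-1)*C| := abs_add_le _ _
        _ ≤ 1 + 2*(m-1) := by
            rw [habs_e, abs_mul]
            have : |2*(m-1)| = 2*(m-1) := abs_of_nonneg (by linarith)
            nlinarith [abs_nonneg (2*(m-1))]
        _ = 2*m-1 := by ring
    have := mul_le_mul_of_nonneg_right this hkpos.le
    linarith
  have h2 : |(w-1)*S| ≤ 1 - w := by
    rw [abs_mul, abs_of_nonpos (by linarith : w - 1 ≤ 0)]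
    calc -(w-1) * |S| ≤ -(w-1) * 1 := mul_le_mul_of_nonneg_left hSle (by linarith)
      _ = 1 - w := by ring
  have h3 : 1 - w ≤ 2/(r*k) := by
    rw [hw', sub_le_iff_le_add, ← add_div, le_div_iff₀ hrkpos]
    linarith
  have h4' : 2/(r*k) ≤ 1/(m-1) := by
    rw [div_le_div_iff₀ hrkpos (by linarith : (0:ℝ) < m-1)]
    linarith
  -- epsilon bounds
  have hke : 2/ε < k := by
    rw [hkdef]
    rw [show (2/ε) = Real.sqrt ((2/ε)^2) from (Real.sqrt_sq (by positivity)).symm]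
    apply Real.sqrt_lt_sqrt (by positivity)
    have : (2/ε)^2 = 4/ε^2 := by ring
    rw [this]; linarith
  have hεk : 1/k < ε/2 := by
    rw [div_lt_div_iff₀ hkpos (by norm_num : (0:ℝ) < 2)]
    have h2k : 2 < k * ε := (div_lt_iff₀ hε).1 hke
    have hcomm : ε * k = k * ε := mul_comm _ _
    linarith
  have hεm : 1/(m-1) < ε/2 := by
    rw [div_lt_div_iff₀ (by linarith : (0:ℝ) < m-1) (by norm_num : (0:ℝ) < 2)]
    have h2m : 2/ε < m - 1 := by linarith
    have h2k : 2 < (m-1) * ε := (div_lt_iff₀ hε).1 h2m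
    have hcomm : ε * (m-1) = (m-1) * ε := mul_comm _ _
    linarith
  calc |starF M t 2 - S| = |(e + 2*(m-1)*C)/((2*m-1)*k) + (w - 1)*S| := by rw [hexpr]
    _ ≤ |(e + 2*(m-1)*C)/((2*m-1)*k)| + |(w-1)*S| := abs_add_le _ _
    _ ≤ 1/k + (1 - w) := add_le_add h1 h2
    _ ≤ 1/k + 1/(m-1) := by linarith
    _ < ε/2 + ε/2 := by linarith
    _ = ε := by ring
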